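/- Let τ₁ > 1 be a real number and τ₂ a real number. The matrix B(τ₁, τ₂) is positive semidefinite if and only if τ₂ ≥ 4. (In terms of the Almgren–Chriss model, with τ₁ = T_post/T and τ₂ = T/t, this characterizes exactly when the three-point sampling (P_t, P_T, P_{T_post}) dominates the (I, J) statistics in Fisher information.) -/

import Mathlib

open Matrix

/-- The matrix `B(τ₁, τ₂)` from the proof of the paper's main Almgren–Chriss theorem,
with `τ₁ = T_post/T` and `τ₂ = T/t`. -/
noncomputable def Bmat (τ₁ τ₂ : ℝ) : Matrix (Fin 2) (Fin 2) ℝ :=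
  !![1 - (τ₁ / 4 - 1 / 6) / (τ₁ / 3 - 1 / 4), 1 - (τ₁ / 2 - 1 / 2) / (τ₁ / 3 - 1 / 4);
     1 - (τ₁ / 2 - 1 / 2) / (τ₁ / 3 - 1 / 4), τ₂ + 1 / (τ₁ - 1) - τ₁ / (τ₁ / 3 - 1 / 4)]

/-- For `τ₁ > 1`, the matrix `B(τ₁, τ₂)` is positive semidefinite if and only if `τ₂ ≥ 4`. -/
theorem Bmat_posSemidef_iff (τ₁ τ₂ : ℝ) (hτ₁ : 1 < τ₁) :
    (Bmat τ₁ τ₂).PosSemidef ↔ 4 ≤ τ₂ := by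
  have h1 : (0:ℝ) < τ₁ - 1 := by linarith
  have h2 : (0:ℝ) < 4 * τ₁ - 3 := by linarith
  have hA : τ₁ / 3 - (4:ℝ)⁻¹ ≠ 0 := by intro h; nlinarith
  have hden : (0:ℝ) < (4 * τ₁ - 3) * (τ₁ - 1) := mul_pos h2 h1
  have key : ∀ a b : ℝ,
      a * ((1 - (τ₁ / 4 - 6⁻¹) / (τ₁ / 3 - 4⁻¹)) * a +
        (1 - (τ₁ / 2 - 2⁻¹) / (τ₁ / 3 - 4⁻¹)) * b) +
      b * ((1 - (τ₁ / 2 - 2⁻¹) / (τ₁ / 3 - 4⁻¹)) * a +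
        (τ₂ + (τ₁ - 1)⁻¹ - τ₁ / (τ₁ / 3 - 4⁻¹)) * b) =
      (((τ₁ - 1) * a + (3 - 2 * τ₁) * b) ^ 2 +
        (4 * τ₁ - 3) * (τ₁ - 1) * (τ₂ - 4) * b ^ 2) / ((4 * τ₁ - 3) * (τ₁ - 1)) := by
    intro a b
    have e1 : τ₁ / 3 - (4:ℝ)⁻¹ = (4 * τ₁ - 3) / 12 := by ring
    have e2 : τ₁ / 4 - (6:ℝ)⁻¹ = (3 * τ₁ - 2) / 12 := by ring
    have e3 : τ₁ / 2 - (2:ℝ)⁻¹ = (τ₁ - 1) / 2 := by ring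
    rw [e1, e2, e3]
    have hB : τ₁ - 1 ≠ 0 := h1.ne'
    have hC : 4 * τ₁ - 3 ≠ 0 := h2.ne'
    have hC' : τ₁ * 4 - 3 ≠ 0 := by intro h; apply hC; linarith
    field_simp
    ring
  constructor
  · intro hps
    have h := hps.dotProduct_mulVec_nonneg ![2 * τ₁ - 3, τ₁ - 1]
    simp [Bmat, dotProduct, Matrix.mulVec, Fin.sum_univ_two] at h
    rw [key] at h
    rw [le_div_iff₀ hden] at h
    nlinarith [h, mul_pos (mul_pos h2 h1) (mul_pos h1 h1)]
  · intro hτ₂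
    refine Matrix.PosSemidef.of_dotProduct_mulVec_nonneg ?_ (fun x => ?_)
    · ext i j
      fin_cases i <;> fin_cases j <;> simp [Bmat, Matrix.conjTranspose_apply]
    · simp [Bmat, dotProduct, Matrix.mulVec, Fin.sum_univ_two]
      rw [key]
      apply div_nonneg _ (le_of_lt hden)
      have hn : 0 ≤ (4 * τ₁ - 3) * (τ₁ - 1) * (τ₂ - 4) * (x 1) ^ 2 :=
        mul_nonneg (mul_nonneg (mul_nonneg h2.le h1.le) (by linarith)) (sq_nonneg _)
      have hsq := sq_nonneg ((τ₁ - 1) * x 0 + (3 - 2 * τ₁) * x 1)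
      linarith
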